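/- Let μ, β, ν, θ, γ, I* be positive reals and p* ∈ (0,1). Set q₁ = μ + βI*, q₂ = (ν+μ)βI*, q₃ = γ/p* + p*, and W = q₁²q₃ + θμp*βI*(βI* − ν) + 2√(q₁q₂q₃(q₁q₃ + θμp*βI*)). For k > 0 let a₁(k) = k(1−p*)q₃ + q₁, a₂(k) = k(1−p*)(q₁q₃ + θμp*βI*) + q₂, a₃(k) = k(1−p*)q₂(q₃ + θμp*). If W < 0, then there exist 0 < k₁ < k₂ such that: for every k ∈ (k₁, k₂) the polynomial λ³ + a₁(k)λ² + a₂(k)λ + a₃(k) has a complex root with strictly positive real part; for every k ∈ (0, k₁) ∪ (k₂, ∞) all its complex roots have strictly negative real part; and for k ∈ {k₁, k₂} it has the pair of purely imaginary roots ±i√(a₂(k)). -/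

import Mathlib

lemma cubic_has_real_root (a b c : ℝ) : ∃ r : ℝ, r^3 + a*r^2 + b*r + c = 0 := by
  set f : ℝ → ℝ := fun x => x^3 + a*x^2 + b*x + c with hf
  have hcont : Continuous f := by fun_prop
  set M : ℝ := 1 + |a| + |b| + |c| with hM
  have hM1 : 1 ≤ M := by nlinarith [abs_nonneg a, abs_nonneg b, abs_nonneg c]
  have h1 : f (-M) ≤ 0 := by
    simp only [hf]
    nlinarith [abs_nonneg a, abs_nonneg b, abs_nonneg c, le_abs_self a, neg_abs_le a,
      le_abs_self b, neg_abs_le b, le_abs_self c, neg_abs_le c, sq_nonneg M]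
  have h2 : 0 ≤ f M := by
    simp only [hf]
    nlinarith [abs_nonneg a, abs_nonneg b, abs_nonneg c, le_abs_self a, neg_abs_le a,
      le_abs_self b, neg_abs_le b, le_abs_self c, neg_abs_le c, sq_nonneg M]
  have hle : (-M : ℝ) ≤ M := by linarith
  obtain ⟨r, _, hr⟩ := intermediate_value_Icc hle hcont.continuousOn ⟨h1, h2⟩
  exact ⟨r, hr⟩

lemma RH_neg (a b c : ℝ) (ha : 0 < a) (hb : 0 < b) (hc : 0 < c) (hab : c < a*b) :
    ∀ z : ℂ, z^3 + (a:ℂ)*z^2 + (b:ℂ)*z + (c:ℂ) = 0 → z.re < 0 := by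
  obtain ⟨r, hr⟩ := cubic_has_real_root a b c
  intro z hz
  by_cases him : z.im = 0
  · have hzr : z = (z.re : ℂ) := Complex.ext rfl (by simp [him])
    rw [hzr] at hz
    have hre : (z.re)^3 + a*z.re^2 + b*z.re + c = 0 := by exact_mod_cast hz
    by_contra h
    push_neg at h
    nlinarith [pow_nonneg h 3, mul_nonneg ha.le (sq_nonneg z.re), mul_nonneg hb.le h]
  · have h2 : (a+r)*(r^2+b) = a*b - c := by linear_combination hr
    have hp : 0 < a + r := by
      by_contra h
      push_neg at h
      have := mul_nonpos_of_nonpos_of_nonneg h (by positivity : (0:ℝ) ≤ r^2+b)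
      linarith
    have hrC : (r:ℂ)^3 + (a:ℂ)*(r:ℂ)^2 + (b:ℂ)*(r:ℂ) + (c:ℂ) = 0 := by exact_mod_cast hr
    have hquad : z^2 + ((a:ℂ)+(r:ℂ))*z + ((b:ℂ) + (a:ℂ)*r + (r:ℂ)^2) = 0 := by
      have hfac : (z - (r:ℂ)) * (z^2 + ((a:ℂ)+(r:ℂ))*z + ((b:ℂ)+(a:ℂ)*r+(r:ℂ)^2)) = 0 := by
        linear_combination hz - hrC
      have hzr : z - (r:ℂ) ≠ 0 := by
        intro h0
        apply him
        rw [sub_eq_zero.mp h0]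
        simp
      exact (mul_eq_zero.mp hfac).resolve_left hzr
    have him2 := congrArg Complex.im hquad
    simp [Complex.add_im, Complex.mul_im, Complex.ofReal_re, Complex.ofReal_im, pow_two] at him2
    have key : z.im * (2*z.re + (a+r)) = 0 := by linarith
    have := (mul_eq_zero.mp key).resolve_left him
    linarith

lemma RH_pos (a b c : ℝ) (ha : 0 < a) (hb : 0 < b) (hc : 0 < c) (hab : a*b < c) :
    ∃ z : ℂ, z^3 + (a:ℂ)*z^2 + (b:ℂ)*z + (c:ℂ) = 0 ∧ 0 < z.re := by
  obtain ⟨r, hr⟩ := cubic_has_real_root a b c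
  have h2 : (a+r)*(r^2+b) = a*b - c := by linear_combination hr
  have hp : a + r < 0 := by
    by_contra h
    push_neg at h
    have := mul_nonneg h (by positivity : (0:ℝ) ≤ r^2+b)
    linarith
  set p : ℝ := a + r with hpdef
  set q : ℝ := b + a*r + r^2 with hqdef
  have hdisc : p^2 - 4*q < 0 := by
    by_contra h
    push_neg at h
    set t : ℝ := (-p + Real.sqrt (p^2 - 4*q))/2 with htdef
    have hts : Real.sqrt (p^2-4*q)^2 = p^2-4*q := Real.sq_sqrt h
    have ht : t^2 + p*t + q = 0 := by
      rw [htdef]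
      field_simp
      nlinarith [hts]
    have htpos : 0 < t := by
      have h0 := Real.sqrt_nonneg (p^2-4*q)
      rw [htdef]
      have : 0 < -p := by linarith
      linarith
    have hroot : t^3 + a*t^2 + b*t + c = 0 := by
      linear_combination (t - r) * ht + hr
    nlinarith [pow_pos htpos 3, mul_pos ha (pow_pos htpos 2), mul_pos hb htpos]
  have hq4 : 0 < q - p^2/4 := by clear_value p q; linarith
  set v : ℝ := Real.sqrt (q - p^2/4) with hvdef
  have hv2 : v^2 = q - p^2/4 := Real.sq_sqrt hq4.le
  refine ⟨(( -p/2 : ℝ) : ℂ) + (v:ℝ)*Complex.I, ?_, by simpa using by linarith⟩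
  have hv2C : (v:ℂ)^2 = (q:ℂ) - (p:ℂ)^2/4 := by exact_mod_cast congrArg (Complex.ofReal) hv2
  have hquad : ((( -p/2 : ℝ) : ℂ) + (v:ℝ)*Complex.I)^2 + (p:ℂ)*((( -p/2 : ℝ) : ℂ) + (v:ℝ)*Complex.I) + (q:ℂ) = 0 := by
    push_cast
    linear_combination (v:ℂ)^2 * Complex.I_sq - hv2C
  have hrC : (r:ℂ)^3 + (a:ℂ)*(r:ℂ)^2 + (b:ℂ)*(r:ℂ) + (c:ℂ) = 0 := by exact_mod_cast hr
  have hpq : (p:ℂ) = (a:ℂ) + r := by push_cast [hpdef]; ring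
  have hqq : (q:ℂ) = (b:ℂ) + a*r + (r:ℂ)^2 := by push_cast [hqdef]; ring
  rw [hpq, hqq] at hquad
  linear_combination ((( -p/2 : ℝ) : ℂ) + (v:ℝ)*Complex.I - (r:ℂ)) * hquad + hrC

lemma cubic_pure_imag (a b c : ℝ) (hb : 0 ≤ b) (h : c = a*b) (z : ℂ)
    (hz : z = Complex.I * ((Real.sqrt b : ℝ) : ℂ) ∨ z = -(Complex.I * ((Real.sqrt b : ℝ) : ℂ))) :
    z^3 + (a:ℂ)*z^2 + (b:ℂ)*z + (c:ℂ) = 0 := by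
  have hs : ((Real.sqrt b : ℝ) : ℂ)^2 = (b:ℂ) := by
    exact_mod_cast congrArg (Complex.ofReal) (Real.sq_sqrt hb)
  have hC : (c:ℂ) = (a:ℂ)*(b:ℂ) := by exact_mod_cast congrArg (Complex.ofReal) h
  have h2 : z^2 = -(b:ℂ) := by
    rcases hz with hz | hz <;> rw [hz] <;>
      linear_combination ((Real.sqrt b : ℝ) : ℂ)^2 * Complex.I_sq - hs
  linear_combination (z + (a:ℂ)) * h2 + hC

/-- Unstable case of Theorem 3.1: if the stability discriminant `W` is
negative, then there exist `0 < k₁ < k₂` such that the characteristic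
polynomial has a root with positive real part for `k ∈ (k₁, k₂)`, only
roots with negative real part for `k ∈ (0, k₁) ∪ (k₂, ∞)`, and the pair of
purely imaginary roots `± i √(a₂(k))` for `k ∈ {k₁, k₂}`. -/
theorem endemic_equilibrium_hopf (μ β ν θ γ Istar : ℝ) (pstar : ℝ)
    (hμ : 0 < μ) (hβ : 0 < β) (hν : 0 < ν) (hθ : 0 < θ) (hγ : 0 < γ)
    (hI : 0 < Istar) (hp : pstar ∈ Set.Ioo (0 : ℝ) 1) :
    let q₁ : ℝ := μ + β * Istar
    let q₂ : ℝ := (ν + μ) * (β * Istar)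
    let q₃ : ℝ := γ / pstar + pstar
    let W : ℝ := q₁ ^ 2 * q₃ + θ * μ * pstar * (β * Istar) * (β * Istar - ν)
      + 2 * Real.sqrt (q₁ * q₂ * q₃ * (q₁ * q₃ + θ * μ * pstar * (β * Istar)))
    let a₁ : ℝ → ℝ := fun k => k * (1 - pstar) * q₃ + q₁
    let a₂ : ℝ → ℝ := fun k =>
      k * (1 - pstar) * (q₁ * q₃ + θ * μ * pstar * (β * Istar)) + q₂
    let a₃ : ℝ → ℝ := fun k => k * (1 - pstar) * q₂ * (q₃ + θ * μ * pstar)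
    W < 0 →
      ∃ k₁ k₂ : ℝ, 0 < k₁ ∧ k₁ < k₂ ∧
        (∀ k : ℝ, k₁ < k → k < k₂ →
          ∃ z : ℂ, z ^ 3 + (a₁ k : ℂ) * z ^ 2 + (a₂ k : ℂ) * z + (a₃ k : ℂ) = 0 ∧
            0 < z.re) ∧
        (∀ k : ℝ, (0 < k ∧ k < k₁) ∨ k₂ < k →
          ∀ z : ℂ, z ^ 3 + (a₁ k : ℂ) * z ^ 2 + (a₂ k : ℂ) * z + (a₃ k : ℂ) = 0 →
            z.re < 0) ∧
        (∀ k : ℝ, k = k₁ ∨ k = k₂ →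
          ∀ z : ℂ, z = Complex.I * (Real.sqrt (a₂ k) : ℂ) ∨
              z = -(Complex.I * (Real.sqrt (a₂ k) : ℂ)) →
            z ^ 3 + (a₁ k : ℂ) * z ^ 2 + (a₂ k : ℂ) * z + (a₃ k : ℂ) = 0) := by
  intro q₁ q₂ q₃ W a₁ a₂ a₃ hW
  obtain ⟨hp0, hp1⟩ := hp
  have h1p : 0 < 1 - pstar := by linarith
  have hE : 0 < β * Istar := by positivity
  have eq₁ : q₁ = μ + β * Istar := rfl
  have eq₂ : q₂ = (ν + μ) * (β * Istar) := rfl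
  have eq₃ : q₃ = γ / pstar + pstar := rfl
  have eqW : W = q₁ ^ 2 * q₃ + θ * μ * pstar * (β * Istar) * (β * Istar - ν)
      + 2 * Real.sqrt (q₁ * q₂ * q₃ * (q₁ * q₃ + θ * μ * pstar * (β * Istar))) := rfl
  have ea₁ : ∀ k : ℝ, a₁ k = k * (1 - pstar) * q₃ + q₁ := fun _ => rfl
  have ea₂ : ∀ k : ℝ, a₂ k = k * (1 - pstar) * (q₁ * q₃ + θ * μ * pstar * (β * Istar)) + q₂ :=
    fun _ => rfl
  have ea₃ : ∀ k : ℝ, a₃ k = k * (1 - pstar) * q₂ * (q₃ + θ * μ * pstar) := fun _ => rfl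
  clear_value q₁ q₂ q₃ W a₁ a₂ a₃
  have hq₁ : 0 < q₁ := by rw [eq₁]; positivity
  have hq₂ : 0 < q₂ := by rw [eq₂]; positivity
  have hq₃ : 0 < q₃ := by rw [eq₃]; have := div_pos hγ hp0; linarith
  have hT : 0 < θ * μ * pstar := by positivity
  have hQpos : 0 < q₁ * q₃ + θ * μ * pstar * (β * Istar) :=
    add_pos (mul_pos hq₁ hq₃) (mul_pos hT hE)
  set A : ℝ := q₃ * (q₁ * q₃ + θ * μ * pstar * (β * Istar)) with hAdef
  set Bc : ℝ := q₁ ^ 2 * q₃ + θ * μ * pstar * (β * Istar) * (β * Istar - ν) with hBdef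
  set C : ℝ := q₁ * q₂ with hCdef
  have hA : 0 < A := by rw [hAdef]; exact mul_pos hq₃ hQpos
  have hC : 0 < C := by rw [hCdef]; exact mul_pos hq₁ hq₂
  set s : ℝ := Real.sqrt (q₁ * q₂ * q₃ * (q₁ * q₃ + θ * μ * pstar * (β * Istar))) with hsdef
  have hsnn : 0 ≤ s := by rw [hsdef]; exact Real.sqrt_nonneg _
  have hs2 : s ^ 2 = A * C := by
    rw [hsdef, Real.sq_sqrt (by positivity)]
    rw [hAdef, hCdef]; ring
  clear_value A Bc C
  have hWeq : W = Bc + 2 * s := by rw [eqW, hBdef, hsdef]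
  clear_value s
  have hW' : Bc + 2 * s < 0 := by rw [← hWeq]; exact hW
  have hB : Bc < 0 := by linarith
  have hD : 0 < Bc ^ 2 - 4 * (A * C) := by
    nlinarith [mul_pos (by linarith : (0:ℝ) < -(Bc + 2*s)) (by linarith : (0:ℝ) < -(Bc - 2*s))]
  set sD : ℝ := Real.sqrt (Bc ^ 2 - 4 * (A * C)) with hsDdef
  have hsD2 : sD ^ 2 = Bc ^ 2 - 4 * (A * C) := by rw [hsDdef]; exact Real.sq_sqrt hD.le
  have hsDpos : 0 < sD := by rw [hsDdef]; exact Real.sqrt_pos.mpr hD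
  clear_value sD
  have hsDltB : sD < -Bc := by nlinarith
  set c₁ : ℝ := (-Bc - sD) / (2 * A) with hc₁def
  set c₂ : ℝ := (-Bc + sD) / (2 * A) with hc₂def
  clear_value c₁ c₂
  have hc₁pos : 0 < c₁ := by rw [hc₁def]; exact div_pos (by linarith) (by linarith)
  have hc₁₂ : c₁ < c₂ := by
    rw [hc₁def, hc₂def, div_lt_div_iff₀ (by linarith) (by linarith)]
    linarith [mul_pos hA hsDpos]
  have hAne : (2 * A : ℝ) ≠ 0 := by positivity
  have hsum : A * (c₁ + c₂) = -Bc := by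
    rw [hc₁def, hc₂def]
    field_simp
    ring
  have hprod : A * (c₁ * c₂) = C := by
    rw [hc₁def, hc₂def]
    field_simp
    linear_combination (-1 : ℝ) * hsD2
  have step1 : ∀ k : ℝ, a₁ k * a₂ k - a₃ k
      = A * (k * (1 - pstar)) ^ 2 + Bc * (k * (1 - pstar)) + C := by
    intro k
    have e₁ := ea₁ k -- k * (1 - pstar) * q₃ + q₁ := rfl
    have e₂ := ea₂ k -- k * (1 - pstar) * (q₁ * q₃ + θ * μ * pstar * (β * Istar)) + q₂ := rfl
    have e₃ := ea₃ k -- k * (1 - pstar) * q₂ * (q₃ + θ * μ * pstar) := rfl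
    rw [e₁, e₂, e₃, hAdef, hBdef, hCdef, eq₁, eq₂]
    ring
  have hkey : ∀ k : ℝ, a₁ k * a₂ k - a₃ k
      = A * (k * (1 - pstar) - c₁) * (k * (1 - pstar) - c₂) := by
    intro k
    linear_combination step1 k + (k * (1 - pstar)) * hsum - hprod
  set k₁ : ℝ := c₁ / (1 - pstar) with hk₁def
  set k₂ : ℝ := c₂ / (1 - pstar) with hk₂def
  clear_value k₁ k₂
  have hk₁c : k₁ * (1 - pstar) = c₁ := by
    rw [hk₁def]; field_simp
  have hk₂c : k₂ * (1 - pstar) = c₂ := by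
    rw [hk₂def]; field_simp
  have hk₁pos : 0 < k₁ := by rw [hk₁def]; exact div_pos hc₁pos h1p
  have hk₁₂ : k₁ < k₂ := by
    rw [hk₁def, hk₂def, div_lt_div_iff₀ h1p h1p]
    exact mul_lt_mul_of_pos_right hc₁₂ h1p
  have ha₁pos : ∀ k : ℝ, 0 < k → 0 < a₁ k := by
    intro k hk
    have e₁ := ea₁ k -- k * (1 - pstar) * q₃ + q₁ := rfl
    rw [e₁]
    have : 0 < k * (1 - pstar) * q₃ := by positivity
    linarith
  have ha₂pos : ∀ k : ℝ, 0 < k → 0 < a₂ k := by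
    intro k hk
    have e₂ := ea₂ k -- k * (1 - pstar) * (q₁ * q₃ + θ * μ * pstar * (β * Istar)) + q₂ := rfl
    rw [e₂]
    have : 0 < k * (1 - pstar) * (q₁ * q₃ + θ * μ * pstar * (β * Istar)) := by
      exact mul_pos (mul_pos hk h1p) hQpos
    linarith
  have ha₃pos : ∀ k : ℝ, 0 < k → 0 < a₃ k := by
    intro k hk
    have e₃ := ea₃ k -- k * (1 - pstar) * q₂ * (q₃ + θ * μ * pstar) := rfl
    rw [e₃]
    have : 0 < q₃ + θ * μ * pstar := by linarith
    exact mul_pos (mul_pos (mul_pos hk h1p) hq₂) this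
  refine ⟨k₁, k₂, hk₁pos, hk₁₂, ?_, ?_, ?_⟩
  · intro k hk1 hk2
    have hk : 0 < k := lt_trans hk₁pos hk1
    have hcc1 : c₁ < k * (1 - pstar) := by
      rw [← hk₁c]; exact mul_lt_mul_of_pos_right hk1 h1p
    have hcc2 : k * (1 - pstar) < c₂ := by
      rw [← hk₂c]; exact mul_lt_mul_of_pos_right hk2 h1p
    have hneg : a₁ k * a₂ k - a₃ k < 0 := by
      rw [hkey k]
      have : 0 < A * (k * (1 - pstar) - c₁) := mul_pos hA (by linarith)
      exact mul_neg_of_pos_of_neg this (by linarith)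
    exact RH_pos (a₁ k) (a₂ k) (a₃ k) (ha₁pos k hk) (ha₂pos k hk) (ha₃pos k hk) (by linarith)
  · intro k hk z hz
    have hk : 0 < k := by rcases hk with ⟨h, _⟩ | h; exact h; exact lt_trans (lt_trans hk₁pos hk₁₂) h
    have hpos : 0 < a₁ k * a₂ k - a₃ k := by
      rw [hkey k]
      rcases ‹(0 < k ∧ k < k₁) ∨ k₂ < k› with ⟨_, hkk⟩ | hkk
      · have hcc1 : k * (1 - pstar) < c₁ := by
          rw [← hk₁c]; exact mul_lt_mul_of_pos_right hkk h1p
        have hcc2 : k * (1 - pstar) < c₂ := by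
          rw [← hk₂c]
          exact mul_lt_mul_of_pos_right (lt_trans hkk hk₁₂) h1p
        have h1 : A * (k * (1 - pstar) - c₁) < 0 := mul_neg_of_pos_of_neg hA (by linarith)
        exact mul_pos_of_neg_of_neg h1 (by linarith)
      · have hcc1 : c₁ < k * (1 - pstar) := by
          rw [← hk₁c]
          exact mul_lt_mul_of_pos_right (lt_trans hk₁₂ hkk) h1p
        have hcc2 : c₂ < k * (1 - pstar) := by
          rw [← hk₂c]; exact mul_lt_mul_of_pos_right hkk h1p
        exact mul_pos (mul_pos hA (by linarith)) (by linarith)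
    exact RH_neg (a₁ k) (a₂ k) (a₃ k) (ha₁pos k hk) (ha₂pos k hk) (ha₃pos k hk)
      (by linarith) z hz
  · intro k hk z hz
    have hkpos : 0 < k := by
      rcases hk with h | h
      · rw [h]; exact hk₁pos
      · rw [h]; exact lt_trans hk₁pos hk₁₂
    have hzero : a₁ k * a₂ k - a₃ k = 0 := by
      rw [hkey k]
      rcases hk with h | h
      · rw [h, hk₁c]; ring
      · rw [h, hk₂c]; ring
    exact cubic_pure_imag (a₁ k) (a₂ k) (a₃ k) (ha₂pos k hkpos).le (by linarith) z hz
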